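/- Let A and B be n×n Hermitian complex matrices, and let λ_1(A) ≤ … ≤ λ_n(A) and λ_1(B) ≤ … ≤ λ_n(B) be their eigenvalues counted with multiplicity in increasing order. Then |λ_k(A) − λ_k(B)| ≤ ‖A − B‖ for every k, where ‖·‖ is the operator norm. In particular, the ordered eigenvalues of a Hermitian matrix are 1-Lipschitz continuous functions of the matrix in operator norm. -/

import Mathlib

open Polynomial

section WeylAux

variable {n : ℕ}

private lemma weyl_charpoly_diag (d : Fin n → ℂ) :
    (Matrix.diagonal d).charpoly = ∏ i, (X - C (d i)) := by
  rw [Matrix.charpoly]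
  have : Matrix.charmatrix (Matrix.diagonal d) = Matrix.diagonal (fun i => X - C (d i)) := by
    ext i j
    by_cases h : i = j
    · subst h; simp [Matrix.charmatrix_apply_eq]
    · simp [Matrix.charmatrix_apply_ne _ _ _ h, Matrix.diagonal_apply_ne _ h]
  rw [this, Matrix.det_diagonal]

private lemma weyl_charpoly_conj (P D : Matrix (Fin n) (Fin n) ℂ)
    (h : P * star P = 1) : (P * D * star P).charpoly = D.charpoly := by
  have h' : star P * P = 1 := by
    have := mul_eq_one_comm.mp h; exact this
  have hmap : (P.map C) * ((star P).map C) = 1 := by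
    rw [← Matrix.map_mul, h, Matrix.map_one _ (map_zero C) (map_one C)]
  have hmap' : ((star P).map C) * (P.map C) = 1 := by
    rw [← Matrix.map_mul, h', Matrix.map_one _ (map_zero C) (map_one C)]
  have hcomm : ∀ (M : Matrix (Fin n) (Fin n) ℂ[X]),
      (Matrix.scalar (Fin n)) X * M = M * (Matrix.scalar (Fin n)) X := by
    intro M
    ext i j
    simp [Matrix.scalar_apply, Matrix.diagonal_mul, Matrix.mul_diagonal, mul_comm]
  have key : Matrix.charmatrix (P * D * star P)
      = P.map C * Matrix.charmatrix D * (star P).map C := by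
    unfold Matrix.charmatrix
    simp only [RingHom.mapMatrix_apply]
    rw [mul_sub, sub_mul, Matrix.map_mul, Matrix.map_mul]
    congr 1
    rw [← hcomm, mul_assoc, hmap, mul_one]
  rw [Matrix.charpoly, Matrix.charpoly, key, Matrix.det_mul, Matrix.det_mul]
  rw [mul_comm, ← mul_assoc, ← Matrix.det_mul, hmap', Matrix.det_one, one_mul]

private lemma weyl_charpoly_herm (A : Matrix (Fin n) (Fin n) ℂ) (hA : A.IsHermitian) :
    A.charpoly = ∏ i, (X - C ((hA.eigenvalues i : ℂ))) := by
  conv_lhs => rw [hA.spectral_theorem, Unitary.conjStarAlgAut_apply]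
  rw [weyl_charpoly_conj _ _ ((Matrix.mem_unitaryGroup_iff).mp (hA.eigenvectorUnitary).2),
    weyl_charpoly_diag]
  rfl

private lemma weyl_multiset_of_prod {f g : Fin n → ℝ}
    (h : (∏ i : Fin n, (X - C ((f i : ℂ)))) = ∏ i : Fin n, (X - C ((g i : ℂ)))) :
    Finset.univ.val.map f = Finset.univ.val.map g := by
  have key : ∀ (f : Fin n → ℝ),
      (∏ i : Fin n, (X - C ((f i : ℂ)))).roots = Finset.univ.val.map (fun i => (f i : ℂ)) := by
    intro f
    rw [Finset.prod_eq_multiset_prod]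
    rw [show (fun i : Fin n => X - C ((f i : ℂ))) = (fun a => X - C a) ∘ (fun i => (f i : ℂ)) from rfl,
      ← Multiset.map_map (fun a => X - C a) (fun i => (f i : ℂ))]
    exact roots_multiset_prod_X_sub_C _
  have h2 : Finset.univ.val.map (fun i => (f i : ℂ)) = Finset.univ.val.map (fun i => (g i : ℂ)) := by
    rw [← key f, ← key g, h]
  have h3 := congrArg (Multiset.map Complex.re) h2
  simpa [Multiset.map_map, Function.comp_def] using h3

private lemma weyl_mono_unique {f g : Fin n → ℝ} (hf : Monotone f) (hg : Monotone g)
    (h : Finset.univ.val.map f = Finset.univ.val.map g) : f = g := by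
  have hval : (Finset.univ.val : Multiset (Fin n)) = ↑(List.finRange n) := by
    rfl
  rw [hval] at h
  have h' : (↑((List.finRange n).map f) : Multiset ℝ) = ↑((List.finRange n).map g) := by
    simpa using h
  have hperm : List.Perm (List.ofFn f) (List.ofFn g) := by
    rw [List.ofFn_eq_map, List.ofFn_eq_map]
    exact Multiset.coe_eq_coe.mp h'
  have := List.Perm.eq_of_sortedLE
    (List.sortedLE_ofFn_iff.mpr hf) (List.sortedLE_ofFn_iff.mpr hg) hperm
  exact List.ofFn_injective this

private lemma weyl_perm_multiset (g : Fin n → ℝ) (σ : Equiv.Perm (Fin n)) :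
    Finset.univ.val.map (g ∘ σ) = Finset.univ.val.map g := by
  have : (Finset.univ.map σ.toEmbedding) = Finset.univ := Finset.map_univ_equiv σ
  calc Finset.univ.val.map (g ∘ σ) = (Finset.univ.val.map σ).map g := by
        rw [Multiset.map_map]
    _ = (Finset.univ.map σ.toEmbedding).val.map g := rfl
    _ = Finset.univ.val.map g := by rw [this]

private lemma weyl_sum_norm_sq_repr (u : OrthonormalBasis (Fin n) ℂ (EuclideanSpace ℂ (Fin n)))
    (y : EuclideanSpace ℂ (Fin n)) (hy : ‖y‖ = 1) :
    ∑ i, ‖u.repr y i‖ ^ 2 = 1 := by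
  have h1 : ‖u.repr y‖ = 1 := by rw [u.repr.norm_map, hy]
  have h2 := EuclideanSpace.norm_eq (u.repr y)
  rw [h1] at h2
  have hnn : 0 ≤ ∑ i, ‖u.repr y i‖ ^ 2 := Finset.sum_nonneg fun i _ => sq_nonneg _
  calc ∑ i, ‖u.repr y i‖ ^ 2 = Real.sqrt (∑ i, ‖u.repr y i‖ ^ 2) ^ 2 :=
        (Real.sq_sqrt hnn).symm
    _ = 1 := by rw [← h2]; norm_num

private lemma weyl_inner_quadform (A : Matrix (Fin n) (Fin n) ℂ) (hA : A.IsHermitian)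
    (α : Fin n → ℝ) (u : OrthonormalBasis (Fin n) ℂ (EuclideanSpace ℂ (Fin n)))
    (hu : ∀ i, Matrix.toEuclideanCLM (𝕜 := ℂ) A (u i) = (α i : ℂ) • u i)
    (y : EuclideanSpace ℂ (Fin n)) :
    (inner ℂ y (Matrix.toEuclideanCLM (𝕜 := ℂ) A y) : ℂ).re
      = ∑ i, α i * ‖u.repr y i‖ ^ 2 := by
  set T := Matrix.toEuclideanCLM (𝕜 := ℂ) A with hT
  have hsymm : ∀ x z : EuclideanSpace ℂ (Fin n), (inner ℂ (T x) z : ℂ) = inner ℂ x (T z) := by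
    intro x z
    have := (Matrix.isHermitian_iff_isSymmetric.mp hA) x z
    exact this
  have hrepr : ∀ i, u.repr (T y) i = (α i : ℂ) * u.repr y i := by
    intro i
    rw [u.repr_apply_apply, u.repr_apply_apply, ← hsymm (u i) y, hu i,
      inner_smul_left]
    simp [Complex.conj_ofReal]
  have h1 : (inner ℂ y (T y) : ℂ) = inner ℂ (u.repr y) (u.repr (T y)) := by
    rw [u.repr.inner_map_map]
  rw [h1, PiLp.inner_apply, Complex.re_sum]
  refine Finset.sum_congr rfl fun i _ => ?_
  rw [RCLike.inner_apply', hrepr i]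
  have h2 : (starRingEnd ℂ) (u.repr y i) * ((α i : ℂ) * u.repr y i)
      = (α i : ℂ) * (u.repr y i * (starRingEnd ℂ) (u.repr y i)) := by ring
  rw [h2, Complex.mul_conj]
  rw [show ((Complex.normSq (u.repr y i) : ℂ)) = ((‖u.repr y i‖ ^ 2 : ℝ) : ℂ) by
    norm_cast
    rw [Complex.normSq_eq_norm_sq]]
  rw [← Complex.ofReal_mul]
  exact Complex.ofReal_re _

private lemma weyl_repr_eq_zero_of_mem_span
    (u : OrthonormalBasis (Fin n) ℂ (EuclideanSpace ℂ (Fin n)))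
    (s : Set (Fin n)) (y : EuclideanSpace ℂ (Fin n))
    (hy : y ∈ Submodule.span ℂ (u '' s)) (i : Fin n) (hi : i ∉ s) : u.repr y i = 0 := by
  rw [u.repr_apply_apply]
  induction hy using Submodule.span_induction with
  | mem z hz =>
      obtain ⟨j, hj, rfl⟩ := hz
      exact u.orthonormal.2 (fun h => hi (h ▸ hj))
  | zero => exact inner_zero_right _
  | add z w _ _ hz hw => rw [inner_add_right, hz, hw, add_zero]
  | smul c z _ hz => rw [inner_smul_right, hz, mul_zero]

private lemma weyl_finrank_span_onb (u : OrthonormalBasis (Fin n) ℂ (EuclideanSpace ℂ (Fin n)))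
    (s : Finset (Fin n)) :
    Module.finrank ℂ (Submodule.span ℂ (u '' (s : Set (Fin n)))) = s.card := by
  have li : LinearIndependent ℂ (fun i : (s : Set (Fin n)) => u i) :=
    u.orthonormal.linearIndependent.comp Subtype.val Subtype.val_injective
  have h := finrank_span_eq_card li
  rw [← Set.image_eq_range] at h
  rw [h]
  simp

private lemma weyl_one_sided (A B : Matrix (Fin n) (Fin n) ℂ)
    (hA : A.IsHermitian) (hB : B.IsHermitian)
    (α β : Fin n → ℝ) (hα : Monotone α) (hβ : Monotone β)
    (u v : OrthonormalBasis (Fin n) ℂ (EuclideanSpace ℂ (Fin n)))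
    (hu : ∀ i, Matrix.toEuclideanCLM (𝕜 := ℂ) A (u i) = (α i : ℂ) • u i)
    (hv : ∀ j, Matrix.toEuclideanCLM (𝕜 := ℂ) B (v j) = (β j : ℂ) • v j)
    (k : Fin n) : α k - β k ≤ ‖Matrix.toEuclideanCLM (𝕜 := ℂ) (A - B)‖ := by
  classical
  set V := Submodule.span ℂ (u '' ((Finset.Ici k : Finset (Fin n)) : Set (Fin n))) with hV
  set W := Submodule.span ℂ (v '' ((Finset.Iic k : Finset (Fin n)) : Set (Fin n))) with hW
  have hdimV : Module.finrank ℂ V = n - k := by rw [hV, weyl_finrank_span_onb, Fin.card_Ici]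
  have hdimW : Module.finrank ℂ W = k + 1 := by rw [hW, weyl_finrank_span_onb, Fin.card_Iic]
  have hne : V ⊓ W ≠ ⊥ := by
    intro hbot
    have h1 := Submodule.finrank_sup_add_finrank_inf_eq V W
    rw [hbot, finrank_bot, hdimV, hdimW] at h1
    have h2 : Module.finrank ℂ ↥(V ⊔ W) ≤ n := by
      have := Submodule.finrank_le (V ⊔ W)
      simpa [finrank_euclideanSpace_fin] using this
    have := k.is_lt
    omega
  obtain ⟨x, hx, hx0⟩ := Submodule.exists_mem_ne_zero_of_ne_bot hne
  set y : EuclideanSpace ℂ (Fin n) := ((‖x‖ : ℂ))⁻¹ • x with hy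
  have hynorm : ‖y‖ = 1 := by
    rw [hy]
    exact norm_smul_inv_norm hx0
  have hyV : y ∈ V := Submodule.smul_mem _ _ hx.1
  have hyW : y ∈ W := Submodule.smul_mem _ _ hx.2
  have hsumu := weyl_sum_norm_sq_repr u y hynorm
  have hsumv := weyl_sum_norm_sq_repr v y hynorm
  have hfA := weyl_inner_quadform A hA α u hu y
  have hfB := weyl_inner_quadform B hB β v hv y
  have hlow : α k ≤ (inner ℂ y (Matrix.toEuclideanCLM (𝕜 := ℂ) A y) : ℂ).re := by
    rw [hfA]
    calc α k = ∑ i, α k * ‖u.repr y i‖ ^ 2 := by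
          rw [← Finset.mul_sum, hsumu, mul_one]
      _ ≤ ∑ i, α i * ‖u.repr y i‖ ^ 2 := by
          refine Finset.sum_le_sum fun i _ => ?_
          by_cases h : k ≤ i
          · exact mul_le_mul_of_nonneg_right (hα h) (sq_nonneg _)
          · have : u.repr y i = 0 := by
              refine weyl_repr_eq_zero_of_mem_span u _ y hyV i ?_
              simpa using h
            rw [this]
            simp
  have hupp : (inner ℂ y (Matrix.toEuclideanCLM (𝕜 := ℂ) B y) : ℂ).re ≤ β k := by
    rw [hfB]
    calc ∑ j, β j * ‖v.repr y j‖ ^ 2 ≤ ∑ j, β k * ‖v.repr y j‖ ^ 2 := by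
          refine Finset.sum_le_sum fun j _ => ?_
          by_cases h : j ≤ k
          · exact mul_le_mul_of_nonneg_right (hβ h) (sq_nonneg _)
          · have : v.repr y j = 0 := by
              refine weyl_repr_eq_zero_of_mem_span v _ y hyW j ?_
              simpa using h
            rw [this]
            simp
      _ = β k := by rw [← Finset.mul_sum, hsumv, mul_one]
  set T := Matrix.toEuclideanCLM (𝕜 := ℂ) A
  set S := Matrix.toEuclideanCLM (𝕜 := ℂ) B
  have hTS : Matrix.toEuclideanCLM (𝕜 := ℂ) (A - B) = T - S := map_sub _ _ _
  calc α k - β k ≤ (inner ℂ y (T y) : ℂ).re - (inner ℂ y (S y) : ℂ).re :=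
        sub_le_sub hlow hupp
    _ = (inner ℂ y ((T - S) y) : ℂ).re := by
        rw [ContinuousLinearMap.sub_apply, inner_sub_right, Complex.sub_re]
    _ ≤ ‖(inner ℂ y ((T - S) y) : ℂ)‖ := Complex.re_le_norm _
    _ ≤ ‖y‖ * ‖(T - S) y‖ := norm_inner_le_norm _ _
    _ ≤ 1 * (‖T - S‖ * 1) := by
        rw [hynorm]
        have := (T - S).le_opNorm y
        rw [hynorm, mul_one] at this
        linarith
    _ = ‖Matrix.toEuclideanCLM (𝕜 := ℂ) (A - B)‖ := by rw [hTS]; ring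

private lemma weyl_clm_basis (A : Matrix (Fin n) (Fin n) ℂ) (hA : A.IsHermitian) (j : Fin n) :
    Matrix.toEuclideanCLM (𝕜 := ℂ) A (hA.eigenvectorBasis j)
      = ((hA.eigenvalues j : ℂ)) • hA.eigenvectorBasis j := by
  apply (WithLp.equiv 2 (Fin n → ℂ)).injective
  show WithLp.ofLp (Matrix.toEuclideanCLM (𝕜 := ℂ) A (hA.eigenvectorBasis j))
    = WithLp.ofLp ((hA.eigenvalues j : ℂ) • hA.eigenvectorBasis j)
  rw [Matrix.ofLp_toEuclideanCLM]
  have h1 := hA.mulVec_eigenvectorBasis j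
  rw [h1, WithLp.ofLp_smul]
  rfl

/-- Given the charpoly factorization hypothesis with monotone `μ`, produce the
sorted eigenvector data needed for `weyl_one_sided`. -/
private lemma weyl_exists_basis (A : Matrix (Fin n) (Fin n) ℂ) (hA : A.IsHermitian)
    (μ : Fin n → ℝ) (hμ : Monotone μ)
    (hchar : A.charpoly = ∏ i : Fin n, (X - C ((μ i : ℂ)))) :
    ∃ u : OrthonormalBasis (Fin n) ℂ (EuclideanSpace ℂ (Fin n)),
      ∀ i, Matrix.toEuclideanCLM (𝕜 := ℂ) A (u i) = (μ i : ℂ) • u i := by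
  classical
  set σ := Tuple.sort hA.eigenvalues with hσ
  have hμeq : μ = hA.eigenvalues ∘ σ := by
    apply weyl_mono_unique hμ (Tuple.monotone_sort hA.eigenvalues)
    rw [weyl_perm_multiset hA.eigenvalues σ]
    apply weyl_multiset_of_prod
    rw [← hchar, weyl_charpoly_herm A hA]
  refine ⟨hA.eigenvectorBasis.reindex σ.symm, fun i => ?_⟩
  rw [OrthonormalBasis.reindex_apply, Equiv.symm_symm]
  rw [hμeq]
  exact weyl_clm_basis A hA (σ i)

end WeylAux

/-- The ordered eigenvalues (with multiplicity) of Hermitian matrices are 1-Lipschitz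
in the operator norm: `|λ_k(A) − λ_k(B)| ≤ ‖A − B‖` for every `k`.  The eigenvalues
counted with multiplicity are encoded as monotone tuples whose associated linear
factorization gives the characteristic polynomial. -/
theorem hermitian_eigenvalues_lipschitz (n : ℕ) (A B : Matrix (Fin n) (Fin n) ℂ)
    (hA : A.IsHermitian) (hB : B.IsHermitian)
    (μA μB : Fin n → ℝ) (hμA : Monotone μA) (hμB : Monotone μB)
    (hAchar : A.charpoly = ∏ i : Fin n, (X - C ((μA i : ℂ))))
    (hBchar : B.charpoly = ∏ i : Fin n, (X - C ((μB i : ℂ)))) :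
    ∀ k : Fin n, |μA k - μB k| ≤ ‖Matrix.toEuclideanCLM (𝕜 := ℂ) (A - B)‖ := by
  intro k
  obtain ⟨u, hu⟩ := weyl_exists_basis A hA μA hμA hAchar
  obtain ⟨v, hv⟩ := weyl_exists_basis B hB μB hμB hBchar
  rw [abs_sub_le_iff]
  constructor
  · exact weyl_one_sided A B hA hB μA μB hμA hμB u v hu hv k
  · have h := weyl_one_sided B A hB hA μB μA hμB hμA v u hv hu k
    have hBA : ‖Matrix.toEuclideanCLM (𝕜 := ℂ) (B - A)‖
        = ‖Matrix.toEuclideanCLM (𝕜 := ℂ) (A - B)‖ := by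
      rw [← neg_sub A B, map_neg, norm_neg]
    rwa [hBA] at h
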